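/- Let T > 0, A > 0, κ > 0, B ∈ ℝ, α > 0, φ > 0, and let Q̄ ≥ 1 be an integer. Then there exists a unique continuously differentiable function h = (h₀, h₁, …, h_{Q̄}) : [0, T] → ℝ^{Q̄+1} satisfying, for all t ∈ [0, T]: h₀'(t) = 0 with h₀(T) = 0, and for each q ∈ {1, …, Q̄}, h_q'(t) = φ·q² − sup_{δ ≥ B} A·exp(−κ·δ)·(δ + h_{q−1}(t) − h_q(t)) with terminal condition h_q(T) = −α·q². -/

import Mathlib

open Set Real NNReal


noncomputable def Fsup_HJB (A κ B : ℝ) (c : ℝ) : ℝ :=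
  if c ≤ 1/κ - B then A/κ * Real.exp (κ*c - 1) else A * Real.exp (-κ*B) * (B + c)

lemma Fsup_HJB_isGreatest {A κ B : ℝ} (hA : 0 < A) (hκ : 0 < κ) (c : ℝ) :
    IsGreatest ((fun δ => A * Real.exp (-κ * δ) * (δ + c)) '' Set.Ici B) (Fsup_HJB A κ B c) := by
  unfold Fsup_HJB
  by_cases hc : c ≤ 1/κ - B
  · rw [if_pos hc]
    constructor
    · refine ⟨1/κ - c, by simp only [mem_Ici]; linarith, ?_⟩
      show A * Real.exp (-κ * (1/κ - c)) * (1/κ - c + c) = A / κ * Real.exp (κ * c - 1)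
      have h1 : -κ * (1/κ - c) = κ * c - 1 := by field_simp; ring
      rw [h1, show (1/κ - c + c) = 1/κ by ring]
      field_simp
    · rintro y ⟨δ, _, rfl⟩
      have key : κ * (δ + c) ≤ Real.exp (κ*c - 1) * Real.exp (κ*δ) := by
        have h := Real.add_one_le_exp (κ * (δ + c) - 1)
        have h2 : Real.exp (κ * (δ + c) - 1) = Real.exp (κ*c - 1) * Real.exp (κ*δ) := by
          rw [← Real.exp_add]; ring_nf
        linarith [h2 ▸ h]
      have e1 : Real.exp (-κ*δ) * Real.exp (κ*δ) = 1 := by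
        rw [← Real.exp_add]; ring_nf; exact Real.exp_zero
      have hp1 := Real.exp_pos (-κ*δ)
      have hp2 := Real.exp_pos (κ*δ)
      have hp3 := Real.exp_pos (κ*c - 1)
      rw [div_mul_eq_mul_div, le_div_iff₀ hκ]
      calc A * Real.exp (-κ*δ) * (δ + c) * κ
          = A * Real.exp (-κ*δ) * (κ * (δ + c)) := by ring
        _ ≤ A * Real.exp (-κ*δ) * (Real.exp (κ*c - 1) * Real.exp (κ*δ)) := by
            apply mul_le_mul_of_nonneg_left key
            positivity
        _ = A * Real.exp (κ*c - 1) * (Real.exp (-κ*δ) * Real.exp (κ*δ)) := by ring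
        _ = A * Real.exp (κ*c - 1) := by rw [e1, mul_one]
  · rw [if_neg hc]
    push_neg at hc
    have hBc : 1 ≤ κ * (B + c) := by
      have h := mul_lt_mul_of_pos_left hc hκ
      have h2 : κ * (1/κ - B) = 1 - κ*B := by field_simp
      rw [h2] at h; nlinarith
    constructor
    · exact ⟨B, self_mem_Ici, rfl⟩
    · rintro y ⟨δ, hδ, rfl⟩
      simp only [mem_Ici] at hδ
      have k1 : 1 + κ*(δ-B) ≤ Real.exp (κ*(δ-B)) := by
        have := Real.add_one_le_exp (κ*(δ-B)); linarith
      have e2 : Real.exp (-κ*δ) * Real.exp (κ*(δ-B)) = Real.exp (-κ*B) := by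
        rw [← Real.exp_add]; ring_nf
      have hp1 := Real.exp_pos (-κ*δ)
      have hp2 := Real.exp_pos (κ*(δ-B))
      calc A * Real.exp (-κ*δ) * (δ + c)
          ≤ A * Real.exp (-κ*δ) * ((B + c) * Real.exp (κ*(δ-B))) := by
            apply mul_le_mul_of_nonneg_left _ (by positivity)
            have : (B+c) * (1 + κ*(δ-B)) ≤ (B+c) * Real.exp (κ*(δ-B)) := by
              apply mul_le_mul_of_nonneg_left k1
              nlinarith
            nlinarith [mul_nonneg (sub_nonneg.mpr hδ) (sub_nonneg.mpr hBc)]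
        _ = A * Real.exp (-κ*B) * (B + c) := by
            rw [show A * Real.exp (-κ*δ) * ((B + c) * Real.exp (κ*(δ-B)))
              = A * (Real.exp (-κ*δ) * Real.exp (κ*(δ-B))) * (B+c) by ring, e2]

lemma sSup_image_eq_HJB {A κ B : ℝ} (hA : 0 < A) (hκ : 0 < κ) (c₁ c₂ : ℝ) :
    sSup ((fun δ => A * Real.exp (-κ * δ) * (δ + c₁ - c₂)) '' Set.Ici B) = Fsup_HJB A κ B (c₁ - c₂) := by
  have h : (fun δ => A * Real.exp (-κ * δ) * (δ + c₁ - c₂))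
      = (fun δ => A * Real.exp (-κ * δ) * (δ + (c₁ - c₂))) := by
    funext δ; ring
  rw [h]
  exact (Fsup_HJB_isGreatest hA hκ (c₁ - c₂)).csSup_eq

lemma expdiff {A κ B : ℝ} (hA : 0 < A) (hκ : 0 < κ) {u v : ℝ} (huv : u ≤ v)
    (hv : v ≤ 1/κ - B) :
    0 ≤ A/κ * Real.exp (κ*v - 1) - A/κ * Real.exp (κ*u - 1) ∧
    A/κ * Real.exp (κ*v - 1) - A/κ * Real.exp (κ*u - 1) ≤ A * Real.exp (-κ*B) * (v - u) := by
  have hmono : Real.exp (κ*u - 1) ≤ Real.exp (κ*v - 1) := by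
    apply Real.exp_le_exp.mpr; nlinarith
  have hbd : Real.exp (κ*v - 1) ≤ Real.exp (-κ*B) := by
    apply Real.exp_le_exp.mpr
    have : κ * v ≤ κ * (1/κ - B) := by nlinarith
    have h2 : κ * (1/κ - B) = 1 - κ*B := by field_simp
    nlinarith
  constructor
  · have := div_pos hA hκ
    nlinarith
  · have h := Real.add_one_le_exp (κ*u - κ*v)
    have h2 : Real.exp (κ*v - 1) * Real.exp (κ*u - κ*v) = Real.exp (κ*u - 1) := by
      rw [← Real.exp_add]; ring_nf
    have key : Real.exp (κ*v-1) - Real.exp (κ*u-1) ≤ Real.exp (κ*v-1) * (κ*v - κ*u) := by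
      nlinarith [Real.exp_pos (κ*v-1)]
    have hAκ : 0 < A/κ := div_pos hA hκ
    calc A/κ * Real.exp (κ*v - 1) - A/κ * Real.exp (κ*u - 1)
        = A/κ * (Real.exp (κ*v-1) - Real.exp (κ*u-1)) := by ring
      _ ≤ A/κ * (Real.exp (κ*v-1) * (κ*v - κ*u)) := by
          exact mul_le_mul_of_nonneg_left key hAκ.le
      _ ≤ A/κ * (Real.exp (-κ*B) * (κ*v - κ*u)) := by
          apply mul_le_mul_of_nonneg_left _ hAκ.le
          apply mul_le_mul_of_nonneg_right hbd (by nlinarith)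
      _ = A * Real.exp (-κ*B) * (v - u) := by field_simp
lemma Fsup_HJB_sub_le {A κ B : ℝ} (hA : 0 < A) (hκ : 0 < κ) {x y : ℝ} (hxy : x ≤ y) :
    0 ≤ Fsup_HJB A κ B y - Fsup_HJB A κ B x ∧
    Fsup_HJB A κ B y - Fsup_HJB A κ B x ≤ A * Real.exp (-κ*B) * (y - x) := by
  have hE := Real.exp_pos (-κ*B)
  have hc₀ : Fsup_HJB A κ B (1/κ - B) = A * Real.exp (-κ*B) * (B + (1/κ - B)) := by
    unfold Fsup_HJB
    rw [if_pos le_rfl]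
    have : κ * (1/κ - B) - 1 = -κ*B := by field_simp; ring
    rw [this, show B + (1/κ - B) = 1/κ by ring]
    field_simp
  by_cases hy : y ≤ 1/κ - B
  · have hx : x ≤ 1/κ - B := le_trans hxy hy
    unfold Fsup_HJB; rw [if_pos hy, if_pos hx]
    exact expdiff hA hκ hxy hy
  · by_cases hx : x ≤ 1/κ - B
    · have h1 := expdiff hA hκ hx le_rfl
      have hFy : Fsup_HJB A κ B y = A * Real.exp (-κ*B) * (B + y) := by
        unfold Fsup_HJB; rw [if_neg hy]
      have hFx : Fsup_HJB A κ B x = A/κ * Real.exp (κ*x - 1) := by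
        unfold Fsup_HJB; rw [if_pos hx]
      push_neg at hy
      have e1 : A/κ * Real.exp (κ*(1/κ-B) - 1) = A * Real.exp (-κ*B) * (B + (1/κ - B)) := by
        have e2 : κ * (1/κ - B) - 1 = -κ*B := by field_simp; ring
        rw [e2]; field_simp; ring
      constructor
      · rw [hFy, hFx]
        nlinarith [h1.1, e1, mul_nonneg (mul_nonneg hA.le hE.le) (sub_nonneg.mpr hy.le)]
      · rw [hFy, hFx]
        nlinarith [h1.2, e1]
    · push_neg at hx
      unfold Fsup_HJB
      rw [if_neg hy, if_neg (not_le.mpr hx)]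
      constructor <;>
        nlinarith [mul_nonneg (mul_nonneg hA.le hE.le) (sub_nonneg.mpr hxy)]

lemma Fsup_HJB_lipschitzWith {A κ B : ℝ} (hA : 0 < A) (hκ : 0 < κ) :
    LipschitzWith (Real.toNNReal (A * Real.exp (-κ*B))) (Fsup_HJB A κ B) := by
  apply LipschitzWith.of_dist_le_mul
  intro x y
  have hL : (0:ℝ) ≤ A * Real.exp (-κ*B) := by positivity
  rw [Real.coe_toNNReal _ hL, Real.dist_eq, Real.dist_eq]
  rcases le_total x y with h | h
  · obtain ⟨h1, h2⟩ := Fsup_HJB_sub_le hA hκ h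
    rw [abs_sub_comm, abs_of_nonneg h1, abs_sub_comm, abs_of_nonneg (sub_nonneg.mpr h)]
    exact h2
  · obtain ⟨h1, h2⟩ := Fsup_HJB_sub_le hA hκ h
    rw [abs_of_nonneg h1, abs_of_nonneg (sub_nonneg.mpr h)]
    exact h2


lemma hasDerivWithinAt_sing (f : ℝ → ℝ) (d x : ℝ) : HasDerivWithinAt f d {x} x := by
  rw [hasDerivWithinAt_iff_tendsto_slope, Set.diff_self, nhdsWithin_empty]
  exact Filter.tendsto_bot

lemma step_exists (a b c' c : ℝ) (g : ℝ → ℝ → ℝ) (L : ℝ≥0)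
    (hlip : ∀ t ∈ Icc a b, LipschitzWith L (g t))
    (hcont : ∀ x : ℝ, ContinuousOn (fun t => g t x) (Icc a b))
    (hac' : a ≤ c') (hc'c : c' ≤ c) (hcb : c ≤ b)
    {ε : ℝ} (hε : 0 < ε) (hLε : (L:ℝ) * ε ≤ 1/2) (hlen : c - c' ≤ ε) (x₁ : ℝ) :
    ∃ z : ℝ → ℝ, z c = x₁ ∧ ∀ t ∈ Icc c' c, HasDerivWithinAt z (g t (z t)) (Icc c' c) t := by
  have hsub : Icc c' c ⊆ Icc a b := Icc_subset_Icc hac' hcb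
  obtain ⟨t₀, ht₀, hmax⟩ := (isCompact_Icc : IsCompact (Icc c' c)).exists_isMaxOn
    (nonempty_Icc.mpr hc'c) (((hcont x₁).mono hsub).norm)
  set M : ℝ := ‖g t₀ x₁‖ with hM
  have hM0 : 0 ≤ M := norm_nonneg _
  set R : ℝ := 2*M*ε with hR
  have hpl : IsPicardLindelof g (tmin := c') (tmax := c) ⟨c, right_mem_Icc.mpr hc'c⟩ x₁
      ⟨R, by positivity⟩ 0 ⟨M + L*R, add_nonneg hM0 (by positivity)⟩ L :=
    { lipschitzOnWith := fun t ht => (hlip t (hsub ht)).lipschitzOnWith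
      continuousOn := fun x _ => (hcont x).mono hsub
      norm_le := by
        intro t ht x hx
        show ‖g t x‖ ≤ M + L*R
        have h1 : dist (g t x) (g t x₁) ≤ (L:ℝ) * dist x x₁ := (hlip t (hsub ht)).dist_le_mul x x₁
        have h2 : dist x x₁ ≤ R := Metric.mem_closedBall.mp hx
        have h3 : ‖g t x₁‖ ≤ M := hmax ht
        have h4 : ‖g t x‖ - ‖g t x₁‖ ≤ dist (g t x) (g t x₁) := by
          rw [dist_eq_norm]; exact norm_sub_norm_le _ _
        have := (L:ℝ).toNNReal.coe_nonneg
        nlinarith [L.coe_nonneg, mul_le_mul_of_nonneg_left h2 L.coe_nonneg]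
      mul_max_le := by
        show (M + (L:ℝ)*R) * max (c - c) (c - c') ≤ R - ((0:ℝ≥0):ℝ)
        rw [NNReal.coe_zero, sub_zero, sub_self, max_eq_right (sub_nonneg.mpr hc'c)]
        have hc0 : 0 ≤ c - c' := sub_nonneg.mpr hc'c
        have hLR : 0 ≤ (L:ℝ)*R := by positivity
        have h5 : (M + (L:ℝ)*R) * (c - c') ≤ (M + (L:ℝ)*R) * ε :=
          mul_le_mul_of_nonneg_left hlen (by positivity)
        have h6 : (L:ℝ)*R*ε = ((L:ℝ)*ε)*(2*M*ε) := by rw [hR]; ring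
        nlinarith [mul_nonneg hM0 hε.le, mul_le_mul_of_nonneg_right hLε (by positivity : (0:ℝ) ≤ 2*M*ε)] }
  obtain ⟨z, hz1, hz2⟩ := hpl.exists_eq_forall_mem_Icc_hasDerivWithinAt₀
  exact ⟨z, hz1, hz2⟩

lemma global_exists (a b : ℝ) (hab : a ≤ b) (g : ℝ → ℝ → ℝ) (L : ℝ≥0)
    (hlip : ∀ t ∈ Icc a b, LipschitzWith L (g t))
    (hcont : ∀ x : ℝ, ContinuousOn (fun t => g t x) (Icc a b)) (x₀ : ℝ) :
    ∃ y : ℝ → ℝ, y b = x₀ ∧ ∀ t ∈ Icc a b, HasDerivWithinAt y (g t (y t)) (Icc a b) t := by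
  set ε : ℝ := 1/(2*((L:ℝ)+1)) with hεdef
  have hεpos : 0 < ε := by positivity
  have hLε : (L:ℝ) * ε ≤ 1/2 := by
    have h2 : (0:ℝ) < 2*((L:ℝ)+1) := by positivity
    rw [hεdef, mul_one_div, div_le_iff₀ h2]
    nlinarith [L.coe_nonneg]
  have key : ∀ n : ℕ, ∃ y : ℝ → ℝ, y b = x₀ ∧
      ∀ t ∈ Icc (max a (b - n*ε)) b,
        HasDerivWithinAt y (g t (y t)) (Icc (max a (b - n*ε)) b) t := by
    intro n
    induction n with
    | zero =>
      simp only [Nat.cast_zero, zero_mul, sub_zero, max_eq_right hab]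
      refine ⟨fun _ => x₀, rfl, ?_⟩
      intro t ht
      rw [Icc_self] at ht ⊢
      obtain rfl : t = b := ht
      exact hasDerivWithinAt_sing _ _ _
    | succ n ih =>
      obtain ⟨y, hyb, hy⟩ := ih
      push_cast
      set c : ℝ := max a (b - n*ε) with hc
      set c' : ℝ := max a (b - ((n:ℝ)+1)*ε) with hc'
      have hnε : (0:ℝ) ≤ n*ε := by positivity
      have hc'c : c' ≤ c := max_le_max le_rfl (by nlinarith)
      have hcb : c ≤ b := max_le hab (by nlinarith)
      have hac' : a ≤ c' := le_max_left _ _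
      have hlen : c - c' ≤ ε := by
        rcases max_cases a (b - n*ε) with ⟨h1, h2⟩ | ⟨h1, h2⟩
        · rw [hc, h1]; linarith [le_max_left a (b - ((n:ℝ)+1)*ε)]
        · rw [hc, h1]; have := le_max_right a (b - ((n:ℝ)+1)*ε); nlinarith
      obtain ⟨z, hzc, hz⟩ := step_exists a b c' c g L hlip hcont hac' hc'c hcb hεpos hLε hlen (y c)
      refine ⟨fun t => if t < c then z t else y t, ?_, ?_⟩
      · show (if b < c then z b else y b) = x₀
        rw [if_neg (not_lt.mpr hcb)]; exact hyb
      · intro t ht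
        have hw_eq_z : ∀ s ∈ Icc c' c, (if s < c then z s else y s) = z s := by
          intro s hs
          by_cases h : s < c
          · rw [if_pos h]
          · obtain rfl : s = c := le_antisymm hs.2 (not_lt.mp h)
            rw [if_neg h, hzc]
        have hw_eq_y : ∀ s ∈ Icc c b, (if s < c then z s else y s) = y s :=
          fun s hs => if_neg (not_lt.mpr hs.1)
        have hunion : Icc c' c ∪ Icc c b = Icc c' b := Icc_union_Icc_eq_Icc hc'c hcb
        rcases lt_trichotomy t c with htc | rfl | htc
        · have htm : t ∈ Icc c' c := ⟨ht.1, htc.le⟩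
          have hd := (hz t htm).congr hw_eq_z (hw_eq_z t htm)
          have hmem : Icc c' c ∈ nhdsWithin t (Icc c' b) :=
            mem_nhdsWithin.mpr ⟨Iio c, isOpen_Iio, htc, fun s hs => ⟨hs.2.1, hs.1.le⟩⟩
          have h2 := hd.mono_of_mem_nhdsWithin hmem
          simpa only [if_pos htc] using h2
        · have hdz := (hz c (right_mem_Icc.mpr hc'c)).congr hw_eq_z (hw_eq_z c (right_mem_Icc.mpr hc'c))
          have hdy := (hy c (left_mem_Icc.mpr hcb)).congr hw_eq_y (hw_eq_y c (left_mem_Icc.mpr hcb))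
          rw [hzc] at hdz
          have h2 := hdz.union hdy
          rw [hunion] at h2
          simpa only [lt_irrefl, if_neg, if_false] using h2
        · have htm : t ∈ Icc c b := ⟨htc.le, ht.2⟩
          have hd := (hy t htm).congr hw_eq_y (hw_eq_y t htm)
          have hmem : Icc c b ∈ nhdsWithin t (Icc c' b) :=
            mem_nhdsWithin.mpr ⟨Ioi c, isOpen_Ioi, htc, fun s hs => ⟨hs.1.le, hs.2.2⟩⟩
          have h2 := hd.mono_of_mem_nhdsWithin hmem
          simpa only [not_lt.mpr htc.le, if_neg, if_false] using h2
  obtain ⟨y, hyb, hy⟩ := key ⌈(b - a)/ε⌉₊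
  have hn : b - (⌈(b - a)/ε⌉₊ : ℝ)*ε ≤ a := by
    have h1 := Nat.le_ceil ((b - a)/ε)
    have := (div_le_iff₀ hεpos).mp h1
    linarith
  rw [max_eq_left hn] at hy
  exact ⟨y, hyb, hy⟩

lemma lipschitz_v {A κ B : ℝ} (hA : 0 < A) (hκ : 0 < κ) (K0 c : ℝ) :
    LipschitzWith (Real.toNNReal (A * Real.exp (-κ*B))) (fun x => K0 - Fsup_HJB A κ B (c - x)) := by
  apply LipschitzWith.of_dist_le_mul
  intro x y
  calc dist (K0 - Fsup_HJB A κ B (c - x)) (K0 - Fsup_HJB A κ B (c - y))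
      = dist (Fsup_HJB A κ B (c - x)) (Fsup_HJB A κ B (c - y)) := dist_sub_left _ _ _
    _ ≤ (Real.toNNReal (A * Real.exp (-κ*B)) : ℝ) * dist (c - x) (c - y) :=
        (Fsup_HJB_lipschitzWith hA hκ).dist_le_mul _ _
    _ = (Real.toNNReal (A * Real.exp (-κ*B)) : ℝ) * dist x y := by rw [dist_sub_left]

lemma level_exists {T A κ B : ℝ} (hT : 0 < T) (hA : 0 < A) (hκ : 0 < κ)
    (K0 v0 : ℝ) (u : ℝ → ℝ) (hu : ContinuousOn u (Icc 0 T)) :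
    ∃ y : ℝ → ℝ, y T = v0 ∧ ∀ t ∈ Icc 0 T,
      HasDerivWithinAt y (K0 - Fsup_HJB A κ B (u t - y t)) (Icc 0 T) t := by
  obtain ⟨y, hyT, hy⟩ := global_exists 0 T hT.le
    (fun t x => K0 - Fsup_HJB A κ B (u t - x)) (Real.toNNReal (A * Real.exp (-κ*B)))
    (fun t _ => lipschitz_v hA hκ K0 (u t))
    (fun x => continuousOn_const.sub
      (((Fsup_HJB_lipschitzWith hA hκ).continuous).comp_continuousOn (hu.sub continuousOn_const)))
    v0
  exact ⟨y, hyT, hy⟩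

theorem main_existence (T A κ B α φ : ℝ) (Qbar : ℕ)
    (hT : 0 < T) (hA : 0 < A) (hκ : 0 < κ) :
    ∃ u : ℕ → ℝ → ℝ, (∀ t, u 0 t = 0) ∧ (∀ q ≤ Qbar, ContinuousOn (u q) (Icc 0 T)) ∧
      ∀ q : ℕ, 1 ≤ q → q ≤ Qbar →
        (∀ t ∈ Icc 0 T, HasDerivWithinAt (u q)
          (φ * (q:ℝ)^2 - Fsup_HJB A κ B (u (q-1) t - u q t)) (Icc 0 T) t) ∧
        u q T = -α * (q:ℝ)^2 := by
  induction Qbar with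
  | zero =>
    exact ⟨fun _ _ => 0, fun _ => rfl, fun q _ => continuousOn_const, fun q h1 h0 => by omega⟩
  | succ n ih =>
    obtain ⟨u, hu0, hucont, hueq⟩ := ih
    obtain ⟨y, hyT, hy⟩ := level_exists hT hA hκ (φ * ((n+1:ℕ):ℝ)^2) (-α * ((n+1:ℕ):ℝ)^2)
      (u n) (hucont n le_rfl)
    refine ⟨Function.update u (n+1) y, ?_, ?_, ?_⟩
    · intro t; rw [Function.update_of_ne (by omega)]; exact hu0 t
    · intro q hq
      rcases Nat.lt_or_ge q (n+1) with h | h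
      · rw [Function.update_of_ne (by omega)]; exact hucont q (by omega)
      · obtain rfl : q = n + 1 := by omega
        rw [Function.update_self]
        exact fun t ht => (hy t ht).continuousWithinAt
    · intro q h1 h2
      rcases Nat.lt_or_ge q (n+1) with h | h
      · have e1 : Function.update u (n+1) y q = u q := Function.update_of_ne (by omega) _ _
        have e2 : Function.update u (n+1) y (q-1) = u (q-1) := Function.update_of_ne (by omega) _ _
        rw [e1, e2]
        exact hueq q h1 (by omega)
      · obtain rfl : q = n + 1 := by omega
        have e1 : Function.update u (n+1) y (n+1) = y := Function.update_self _ _ _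
        have e2 : Function.update u (n+1) y (n+1-1) = u n := by
          have : n + 1 - 1 = n := rfl
          rw [this]
          exact Function.update_of_ne (by omega) _ _
        rw [e1, e2]
        exact ⟨hy, hyT⟩

lemma deriv_Iic {f : ℝ → ℝ} {d T t : ℝ} (hf : HasDerivWithinAt f d (Icc 0 T) t)
    (ht : t ∈ Ioc 0 T) : HasDerivWithinAt f d (Iic t) t :=
  hf.mono_of_mem_nhdsWithin (mem_nhdsWithin.mpr ⟨Ioi 0, isOpen_Ioi, ht.1,
    fun _ hs => ⟨hs.1.le, le_trans hs.2 ht.2⟩⟩)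


/-- `h : ℝ → ℕ → ℝ` solves the single-agent (reference model) HJB ODE system on `[0,T]`:
`h₀' = 0` with `h₀(T) = 0`, and for `1 ≤ q ≤ Q̄`,
`h_q'(t) = φ·q² − sup_{δ ≥ B} A·exp(−κ·δ)·(δ + h_{q−1}(t) − h_q(t))`
with `h_q(T) = −α·q²`. -/
def IsSingleAgentHJBSolution (T A κ B α φ : ℝ) (Qbar : ℕ) (h : ℝ → ℕ → ℝ) : Prop :=
  (∀ t ∈ Set.Icc (0 : ℝ) T, HasDerivWithinAt (fun s => h s 0) 0 (Set.Icc 0 T) t) ∧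
  h T 0 = 0 ∧
  ∀ q : ℕ, 1 ≤ q → q ≤ Qbar →
    (∀ t ∈ Set.Icc (0 : ℝ) T,
      HasDerivWithinAt (fun s => h s q)
        (φ * (q : ℝ) ^ 2 -
          sSup ((fun δ => A * Real.exp (-κ * δ) * (δ + h t (q - 1) - h t q)) '' Set.Ici B))
        (Set.Icc 0 T) t) ∧
    h T q = -α * (q : ℝ) ^ 2

/-- Existence and uniqueness for the single-agent reference model
HJB ODE system: there is a unique continuously differentiable solution
`h = (h₀, …, h_{Q̄})` on `[0, T]`. -/
theorem singleAgent_HJB_existence_uniqueness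
    (T A κ B α φ : ℝ) (Qbar : ℕ)
    (hT : 0 < T) (hA : 0 < A) (hκ : 0 < κ) (hα : 0 < α) (hφ : 0 < φ) (hQ : 1 ≤ Qbar) :
    (∃ h : ℝ → ℕ → ℝ, IsSingleAgentHJBSolution T A κ B α φ Qbar h) ∧
    ∀ h₁ h₂ : ℝ → ℕ → ℝ,
      IsSingleAgentHJBSolution T A κ B α φ Qbar h₁ →
      IsSingleAgentHJBSolution T A κ B α φ Qbar h₂ →
      ∀ t ∈ Set.Icc (0 : ℝ) T, ∀ q ≤ Qbar, h₁ t q = h₂ t q := by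
  constructor
  · obtain ⟨u, hu0, hucont, hueq⟩ := main_existence T A κ B α φ Qbar hT hA hκ
    refine ⟨fun t q => u q t, ?_, hu0 T, ?_⟩
    · intro t ht
      have e : (fun s => u 0 s) = fun _ => (0:ℝ) := funext fun s => hu0 s
      show HasDerivWithinAt (fun s => u 0 s) 0 (Icc 0 T) t
      rw [e]
      exact hasDerivWithinAt_const _ _ _
    · intro q h1 h2
      refine ⟨?_, (hueq q h1 h2).2⟩
      intro t ht
      show HasDerivWithinAt (fun s => u q s)
        (φ * (q : ℝ) ^ 2 -
          sSup ((fun δ => A * Real.exp (-κ * δ) * (δ + u (q-1) t - u q t)) '' Set.Ici B))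
        (Icc 0 T) t
      rw [sSup_image_eq_HJB hA hκ]
      exact (hueq q h1 h2).1 t ht
  · intro h₁ h₂ hs₁ hs₂
    suffices H : ∀ q ≤ Qbar, ∀ t ∈ Icc (0:ℝ) T, h₁ t q = h₂ t q by
      intro t ht q hq; exact H q hq t ht
    intro q
    induction q with
    | zero =>
      intro _
      obtain ⟨hd₁, hT₁, _⟩ := hs₁
      obtain ⟨hd₂, hT₂, _⟩ := hs₂
      have key := ODE_solution_unique_of_mem_Icc_left
        (v := fun _ _ => (0:ℝ)) (s := fun _ => (univ : Set ℝ)) (K := 0)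
        (fun _ _ => (LipschitzWith.const _).lipschitzOnWith)
        (fun t ht => (hd₁ t ht).continuousWithinAt)
        (fun t ht => deriv_Iic (hd₁ t ⟨ht.1.le, ht.2⟩) ht)
        (fun _ _ => mem_univ _)
        (fun t ht => (hd₂ t ht).continuousWithinAt)
        (fun t ht => deriv_Iic (hd₂ t ⟨ht.1.le, ht.2⟩) ht)
        (fun _ _ => mem_univ _)
        (hT₁.trans hT₂.symm)
      exact fun t ht => key ht
    | succ q ih =>
      intro hq
      have hq' : q ≤ Qbar := by omega
      have ihq := ih hq'
      obtain ⟨hp₁, hpT₁⟩ := hs₁.2.2 (q+1) (by omega) hq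
      obtain ⟨hp₂, hpT₂⟩ := hs₂.2.2 (q+1) (by omega) hq
      set L : ℝ≥0 := Real.toNNReal (A * Real.exp (-κ*B)) with hL
      set v : ℝ → ℝ → ℝ :=
        fun t x => φ * ((q+1:ℕ):ℝ)^2 - Fsup_HJB A κ B (h₁ t q - x) with hv
      have hd₁' : ∀ t ∈ Icc (0:ℝ) T,
          HasDerivWithinAt (fun s => h₁ s (q+1)) (v t (h₁ t (q+1))) (Icc 0 T) t := by
        intro t ht
        have h2 := hp₁ t ht
        simp only [Nat.add_sub_cancel] at h2
        rwa [sSup_image_eq_HJB hA hκ] at h2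
      have hd₂' : ∀ t ∈ Icc (0:ℝ) T,
          HasDerivWithinAt (fun s => h₂ s (q+1)) (v t (h₂ t (q+1))) (Icc 0 T) t := by
        intro t ht
        have h2 := hp₂ t ht
        simp only [Nat.add_sub_cancel] at h2
        rw [sSup_image_eq_HJB hA hκ] at h2
        rwa [show h₂ t q = h₁ t q from (ihq t ht).symm] at h2
      have key := ODE_solution_unique_of_mem_Icc_left
        (v := v) (s := fun _ => (univ : Set ℝ)) (K := L)
        (fun t _ => (lipschitz_v hA hκ _ _).lipschitzOnWith)
        (fun t ht => (hd₁' t ht).continuousWithinAt)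
        (fun t ht => deriv_Iic (hd₁' t ⟨ht.1.le, ht.2⟩) ht)
        (fun _ _ => mem_univ _)
        (fun t ht => (hd₂' t ht).continuousWithinAt)
        (fun t ht => deriv_Iic (hd₂' t ⟨ht.1.le, ht.2⟩) ht)
        (fun _ _ => mem_univ _)
        (hpT₁.trans hpT₂.symm)
      exact fun t ht => key ht
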